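/- Independent series system, majorized reciprocal scales: Let F, G be distribution functions with hazard rates r_X, r_Y satisfying r_X(u) >= r_Y(u) for all u (X <=_hr Y), and suppose u |-> u r_Y(u) is concave. Let lambda, sigma, xi all be decreasing vectors (lambda_1 >= ... >= lambda_n; sigma, xi positive decreasing). If (1/sigma_1,...,1/sigma_n) is majorized by (1/xi_1,...,1/xi_n), then for all t > lambda_1: sum_{k=1}^n (1/sigma_k) r_X((t - lambda_k)/sigma_k) >= sum_{k=1}^n (1/xi_k) r_Y((t - lambda_k)/xi_k). -/

import Mathlib

open Set Finset

/-- Secant slopes of a concave function through a fixed base point are antitone. -/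
lemma secant_anti' {s : Set ℝ} {ψ : ℝ → ℝ} (hf : ConcaveOn ℝ s ψ) {a x y : ℝ}
    (ha : a ∈ s) (hx : x ∈ s) (hy : y ∈ s) (hxa : x ≠ a) (hya : y ≠ a) (hxy : x ≤ y) :
    (ψ y - ψ a) / (y - a) ≤ (ψ x - ψ a) / (x - a) := by
  have := hf.neg.secant_mono ha hx hy hxa hya hxy
  simp only [Pi.neg_apply] at this
  have h1 : (-ψ x - -ψ a) / (x - a) = -((ψ x - ψ a) / (x - a)) := by ring
  have h2 : (-ψ y - -ψ a) / (y - a) = -((ψ y - ψ a) / (y - a)) := by ring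
  rw [h1, h2] at this
  linarith

/-- A concave function on `Ioi 0` admits an antitone supergradient selection. -/
lemma exists_supergrad' {ψ : ℝ → ℝ} (hconc : ConcaveOn ℝ (Ioi 0) ψ) :
    ∃ s : ℝ → ℝ, (∀ u v : ℝ, 0 < u → u ≤ v → s v ≤ s u) ∧
      (∀ u w : ℝ, 0 < u → 0 < w → ψ w ≤ ψ u + s u * (w - u)) := by
  classical
  set S : ℝ → ℝ := fun u => sSup ((fun v => (ψ v - ψ u) / (v - u)) '' Ioi u) with hS
  have hne : ∀ u : ℝ, ((fun v => (ψ v - ψ u) / (v - u)) '' Ioi u).Nonempty :=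
    fun u => ⟨_, ⟨u + 1, by simp, rfl⟩⟩
  have hbdd : ∀ u : ℝ, 0 < u → BddAbove ((fun v => (ψ v - ψ u) / (v - u)) '' Ioi u) := by
    intro u hu
    refine ⟨(ψ u - ψ (u/2)) / (u - u/2), ?_⟩
    rintro x ⟨v, hv, rfl⟩
    have h1 : (ψ v - ψ (u/2)) / (v - u/2) ≤ (ψ u - ψ (u/2)) / (u - u/2) := by
      have := secant_anti' hconc (a := u/2) (x := u) (y := v)
        (Set.mem_Ioi.2 (by linarith) : (u/2:ℝ) ∈ Set.Ioi 0)
        (Set.mem_Ioi.2 hu) (Set.mem_Ioi.2 (lt_trans hu hv)) (by linarith [Set.mem_Ioi.1 hv])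
        (by linarith [Set.mem_Ioi.1 hv]) (le_of_lt hv)
      exact this
    have h2 : (ψ v - ψ u) / (v - u) ≤ (ψ v - ψ (u/2)) / (v - u/2) := by
      have hv' := Set.mem_Ioi.1 hv
      have := secant_anti' hconc (a := v) (x := u/2) (y := u)
        (Set.mem_Ioi.2 (lt_trans hu hv')) (Set.mem_Ioi.2 (by linarith)) (Set.mem_Ioi.2 hu)
        (by linarith) (by linarith) (by linarith)
      have e1 : (ψ u - ψ v) / (u - v) = (ψ v - ψ u) / (v - u) := by
        rw [← neg_div_neg_eq]; ring_nf
      have e2 : (ψ (u/2) - ψ v) / (u/2 - v) = (ψ v - ψ (u/2)) / (v - u/2) := by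
        rw [← neg_div_neg_eq]; ring_nf
      rw [e1, e2] at this; exact this
    linarith
  refine ⟨S, ?_, ?_⟩
  · intro u v hu huv
    rcases eq_or_lt_of_le huv with rfl | huv
    · exact le_refl _
    have hv : 0 < v := lt_trans hu huv
    have h1 : S v ≤ (ψ v - ψ u) / (v - u) := by
      apply csSup_le (hne v)
      rintro x ⟨w, hw, rfl⟩
      have hw' := Set.mem_Ioi.1 hw
      have := secant_anti' hconc (a := v) (x := u) (y := w)
        (Set.mem_Ioi.2 hv) (Set.mem_Ioi.2 hu) (Set.mem_Ioi.2 (lt_trans hv hw'))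
        (by linarith) (by linarith) (by linarith)
      have e1 : (ψ u - ψ v) / (u - v) = (ψ v - ψ u) / (v - u) := by
        rw [← neg_div_neg_eq]; ring_nf
      rw [e1] at this; exact this
    have h2 : (ψ v - ψ u) / (v - u) ≤ S u :=
      le_csSup (hbdd u hu) ⟨v, Set.mem_Ioi.2 huv, rfl⟩
    linarith
  · intro u w hu hw
    rcases lt_trichotomy w u with hwu | rfl | huw
    · have hslope : S u ≤ (ψ w - ψ u) / (w - u) := by
        apply csSup_le (hne u)
        rintro x ⟨v, hv, rfl⟩
        have hv' := Set.mem_Ioi.1 hv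
        have := secant_anti' hconc (a := u) (x := w) (y := v)
          (Set.mem_Ioi.2 hu) (Set.mem_Ioi.2 hw) (Set.mem_Ioi.2 (lt_trans hu hv'))
          (by linarith) (by linarith) (by linarith)
        exact this
      have hne' : w - u < 0 := by linarith
      have : ψ w - ψ u = (ψ w - ψ u) / (w - u) * (w - u) :=
        (div_mul_cancel₀ _ (by linarith : w - u ≠ 0)).symm
      nlinarith [mul_le_mul_of_nonpos_right hslope (le_of_lt hne')]
    · simp
    · have hslope : (ψ w - ψ u) / (w - u) ≤ S u :=
        le_csSup (hbdd u hu) ⟨w, Set.mem_Ioi.2 huw, rfl⟩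
      have hne' : (0:ℝ) < w - u := by linarith
      have : ψ w - ψ u = (ψ w - ψ u) / (w - u) * (w - u) :=
        (div_mul_cancel₀ _ (by linarith : w - u ≠ 0)).symm
      nlinarith [mul_le_mul_of_nonneg_right hslope (le_of_lt hne')]

/-- Abel summation: an antitone sequence paired with a sequence whose partial
sums are nonpositive and whose total sum vanishes gives a nonpositive sum. -/
lemma abel_nonpos' (c d : ℕ → ℝ) (n : ℕ)
    (hc : ∀ i j : ℕ, i ≤ j → j < n → c j ≤ c i)
    (hD : ∀ j, j ≤ n → ∑ i ∈ range j, d i ≤ 0)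
    (hDn : ∑ i ∈ range n, d i = 0) :
    ∑ i ∈ range n, c i * d i ≤ 0 := by
  have h := Finset.sum_range_by_parts c d n
  simp only [smul_eq_mul] at h
  rw [h, hDn, mul_zero, zero_sub, neg_nonpos]
  apply Finset.sum_nonneg
  intro i hi
  have hi' := Finset.mem_range.1 hi
  have h1 : c (i + 1) ≤ c i := hc i (i + 1) (Nat.le_succ i) (by omega)
  have h2 : ∑ j ∈ range (i + 1), d j ≤ 0 := hD (i + 1) (by omega)
  nlinarith [mul_nonneg (neg_nonneg.2 (show c (i+1) - c i ≤ 0 by linarith)) (neg_nonneg.2 h2)]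

/-- Rewriting a truncated sum over `Fin n` as an initial-segment sum over `ℕ`. -/
lemma fin_sum_bridge' {n : ℕ} (x : Fin n → ℝ) (j : ℕ) (hj : j ≤ n) :
    (∑ i : Fin n, if (i : ℕ) < j then x i else 0) =
      ∑ m ∈ range j, (fun m => if h : m < n then x ⟨m, h⟩ else 0) m := by
  have h1 : (∑ i : Fin n, if (i : ℕ) < j then x i else 0) =
      ∑ m ∈ range n, (if m < j then (if h : m < n then x ⟨m, h⟩ else 0) else 0) := by
    rw [Finset.sum_range]
    apply Finset.sum_congr rfl
    intro i _
    simp [i.isLt]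
  rw [h1]
  rw [← Finset.sum_subset (Finset.range_subset_range.2 hj)]
  · apply Finset.sum_congr rfl
    intro m hm
    rw [if_pos (Finset.mem_range.1 hm)]
  · intro m _ hm
    rw [if_neg (fun h => hm (Finset.mem_range.2 h))]

/-- Independent series systems (Theorem 4 i of the paper): if `X ≤_hr Y`,
`u·r_Y(u)` is concave, and `(1/σ)` is majorized by `(1/ξ)`, then the hazard
rate of `X_{1:n}` dominates that of `Y_{1:n}`. -/
theorem series_independent_hr_majorization {n : ℕ}
    (F G f g : ℝ → ℝ) (rX rY : ℝ → ℝ) (lam σ ξ : Fin n → ℝ)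
    (hF' : ∀ u, HasDerivAt F (f u) u) (hG' : ∀ u, HasDerivAt G (g u) u)
    (hrX : ∀ u, rX u = f u / (1 - F u)) (hrY : ∀ u, rY u = g u / (1 - G u))
    (hhr : ∀ u, rY u ≤ rX u)
    (hconc : ConcaveOn ℝ (Ioi 0) (fun u => u * rY u))
    (hlamdec : ∀ i j : Fin n, i ≤ j → lam j ≤ lam i)
    (hσpos : ∀ i, 0 < σ i) (hξpos : ∀ i, 0 < ξ i)
    (hσdec : ∀ i j : Fin n, i ≤ j → σ j ≤ σ i)
    (hξdec : ∀ i j : Fin n, i ≤ j → ξ j ≤ ξ i)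
    -- `(1/σ)` is majorized by `(1/ξ)`: both vectors are increasing, so the
    -- partial sums of smallest entries are the initial partial sums
    (hmaj : (∀ j < n, (∑ i : Fin n, if (i : ℕ) < j then 1 / ξ i else 0) ≤
        ∑ i : Fin n, if (i : ℕ) < j then 1 / σ i else 0) ∧
      (∑ i : Fin n, 1 / ξ i) = ∑ i : Fin n, 1 / σ i) :
    ∀ t, (∀ k, lam k < t) →
      (∑ k, (1 / ξ k) * rY ((t - lam k) / ξ k)) ≤
        ∑ k, (1 / σ k) * rX ((t - lam k) / σ k) := by
  classical
  intro t ht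
  obtain ⟨s, hsanti, hsgrad⟩ := exists_supergrad' hconc
  have hδ : ∀ k : Fin n, 0 < t - lam k := fun k => sub_pos.2 (ht k)
  -- per-index key inequality
  have key : ∀ k : Fin n,
      (1 / ξ k) * rY ((t - lam k) / ξ k) ≤
        (1 / σ k) * rY ((t - lam k) / σ k) +
          s ((t - lam k) / σ k) * (1 / ξ k - 1 / σ k) := by
    intro k
    have hσk := hσpos k
    have hξk := hξpos k
    have hδk := hδ k
    set uv := (t - lam k) / σ k with huv
    set wv := (t - lam k) / ξ k with hwv
    have hu0 : 0 < uv := div_pos hδk hσk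
    have hw0 : 0 < wv := div_pos hδk hξk
    have h : wv * rY wv ≤ uv * rY uv + s uv * (wv - uv) := hsgrad uv wv hu0 hw0
    have h' := mul_le_mul_of_nonneg_right h (le_of_lt (one_div_pos.2 hδk))
    have e1 : wv * (1 / (t - lam k)) = 1 / ξ k := by
      rw [hwv]; field_simp
    have e2 : uv * (1 / (t - lam k)) = 1 / σ k := by
      rw [huv]; field_simp
    have lhs_eq : wv * rY wv * (1 / (t - lam k)) = (1 / ξ k) * rY wv := by
      rw [mul_right_comm, e1]
    have rhs_eq : (uv * rY uv + s uv * (wv - uv)) * (1 / (t - lam k)) =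
        (1 / σ k) * rY uv + s uv * (1 / ξ k - 1 / σ k) := by
      rw [add_mul, mul_right_comm uv (rY uv), e2, mul_assoc, sub_mul, e1, e2]
    rw [lhs_eq, rhs_eq] at h'
    exact h'
  -- the correction term is nonpositive
  set C : ℕ → ℝ := fun m => if h : m < n then s ((t - lam ⟨m, h⟩) / σ ⟨m, h⟩) else 0 with hC
  set D : ℕ → ℝ := fun m => if h : m < n then 1 / ξ ⟨m, h⟩ - 1 / σ ⟨m, h⟩ else 0 with hD
  have hDsplit : ∀ j, j ≤ n → ∑ i ∈ range j, D i =
      (∑ i : Fin n, if (i : ℕ) < j then 1 / ξ i else 0) -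
        ∑ i : Fin n, if (i : ℕ) < j then 1 / σ i else 0 := by
    intro j hj
    rw [fin_sum_bridge' (fun i => 1 / ξ i) j hj, fin_sum_bridge' (fun i => 1 / σ i) j hj,
      ← Finset.sum_sub_distrib]
    apply Finset.sum_congr rfl
    intro m hm
    have hmn : m < n := lt_of_lt_of_le (Finset.mem_range.1 hm) hj
    simp only [hD, dif_pos hmn]
  have hDn : ∑ i ∈ range n, D i = 0 := by
    rw [hDsplit n le_rfl]
    have h1 : (∑ i : Fin n, if (i : ℕ) < n then 1 / ξ i else 0) = ∑ i : Fin n, 1 / ξ i :=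
      Finset.sum_congr rfl (fun i _ => if_pos i.isLt)
    have h2 : (∑ i : Fin n, if (i : ℕ) < n then 1 / σ i else 0) = ∑ i : Fin n, 1 / σ i :=
      Finset.sum_congr rfl (fun i _ => if_pos i.isLt)
    rw [h1, h2, hmaj.2, sub_self]
  have hDle : ∀ j, j ≤ n → ∑ i ∈ range j, D i ≤ 0 := by
    intro j hj
    rcases lt_or_eq_of_le hj with hj' | hj'
    · rw [hDsplit j hj]
      linarith [hmaj.1 j hj']
    · rw [hj']
      exact le_of_eq hDn
  have hCanti : ∀ i j : ℕ, i ≤ j → j < n → C j ≤ C i := by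
    intro i j hij hjn
    have hin : i < n := lt_of_le_of_lt hij hjn
    simp only [hC, dif_pos hin, dif_pos hjn]
    set ik : Fin n := ⟨i, hin⟩
    set jk : Fin n := ⟨j, hjn⟩
    have hle : ik ≤ jk := hij
    have harg : (t - lam ik) / σ ik ≤ (t - lam jk) / σ jk := by
      apply div_le_div₀ (le_of_lt (hδ jk)) (by linarith [hlamdec ik jk hle]) (hσpos jk)
        (hσdec ik jk hle)
    exact hsanti _ _ (div_pos (hδ ik) (hσpos ik)) harg
  have hcorr : (∑ k : Fin n, s ((t - lam k) / σ k) * (1 / ξ k - 1 / σ k)) ≤ 0 := by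
    have hbridge : (∑ k : Fin n, s ((t - lam k) / σ k) * (1 / ξ k - 1 / σ k)) =
        ∑ m ∈ range n, C m * D m := by
      rw [Finset.sum_range]
      apply Finset.sum_congr rfl
      intro k _
      simp only [hC, hD, dif_pos k.isLt]
    rw [hbridge]
    exact abel_nonpos' C D n hCanti hDle hDn
  -- combine
  calc (∑ k, (1 / ξ k) * rY ((t - lam k) / ξ k))
      ≤ ∑ k : Fin n, ((1 / σ k) * rY ((t - lam k) / σ k) +
          s ((t - lam k) / σ k) * (1 / ξ k - 1 / σ k)) :=
        Finset.sum_le_sum (fun k _ => key k)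
    _ = (∑ k : Fin n, (1 / σ k) * rY ((t - lam k) / σ k)) +
          ∑ k : Fin n, s ((t - lam k) / σ k) * (1 / ξ k - 1 / σ k) :=
        Finset.sum_add_distrib
    _ ≤ (∑ k : Fin n, (1 / σ k) * rY ((t - lam k) / σ k)) + 0 := by linarith [hcorr]
    _ = ∑ k : Fin n, (1 / σ k) * rY ((t - lam k) / σ k) := add_zero _
    _ ≤ ∑ k, (1 / σ k) * rX ((t - lam k) / σ k) :=
        Finset.sum_le_sum (fun k _ =>
          mul_le_mul_of_nonneg_left (hhr _) (le_of_lt (one_div_pos.2 (hσpos k))))
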